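/- Trace formula for the cycle graph: for the cycle graph on L ≥ 3 vertices, Σ_{j=1}^{L} exp(2t cos(2πj/L)) = L · Σ_{r=−∞}^{∞} I_{rL}(2t) for all real t, where I_n is the modified Bessel function of the first kind. -/

import Mathlib

/-- The modified Bessel function of the first kind of integer order l,
I_l(x) = Σ_{m≥0} (x/2)^{l+2m} / (m!(l+m)!). -/
noncomputable def besselI (l : ℕ) (x : ℝ) : ℝ :=
  ∑' m : ℕ, (x / 2) ^ (l + 2 * m) / ((Nat.factorial m) * (Nat.factorial (l + m)))

open Complex

lemma base_summable (t : ℝ) :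
    Summable (fun p : ℕ × ℕ => |t| ^ (p.1 + p.2) / (p.1.factorial * p.2.factorial)) := by
  have h := (Real.summable_pow_div_factorial |t|).mul_of_nonneg
    (Real.summable_pow_div_factorial |t|) (fun n => by positivity) (fun n => by positivity)
  convert h using 2 with p
  rw [pow_add]
  field_simp

lemma expand_exp (t θ : ℝ) :
    (Real.exp (2 * t * Real.cos θ) : ℂ) =
      ∑' p : ℕ × ℕ, ((t ^ (p.1 + p.2) / (p.1.factorial * p.2.factorial) : ℝ) : ℂ) *
        Complex.exp (((p.1 : ℝ) - (p.2 : ℝ)) * θ * I) := by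
  have hcos : ((2 * t * Real.cos θ : ℝ) : ℂ) = t * Complex.exp (θ * I) + t * Complex.exp (-θ * I) := by
    push_cast
    rw [Complex.cos]
    ring
  rw [Complex.ofReal_exp, hcos, Complex.exp_add]
  have hexp : ∀ x : ℂ, Complex.exp x = ∑' n : ℕ, x ^ n / n.factorial := by
    intro x; rw [Complex.exp_eq_exp_ℂ, NormedSpace.exp_eq_tsum_div]
  rw [hexp ((t : ℂ) * Complex.exp (θ * I)), hexp ((t : ℂ) * Complex.exp (-θ * I))]
  have hnorm : ∀ s : ℝ, Summable (fun n : ℕ => ‖((t : ℂ) * Complex.exp (s * I)) ^ n / n.factorial‖) := by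
    intro s
    have : ∀ n : ℕ, ‖((t : ℂ) * Complex.exp (s * I)) ^ n / n.factorial‖ = |t| ^ n / n.factorial := by
      intro n
      rw [norm_div, norm_pow, norm_mul]
      simp [Complex.norm_exp_ofReal_mul_I]
    rw [funext this]
    exact Real.summable_pow_div_factorial _
  have h2 := hnorm (-θ)
  simp only [Complex.ofReal_neg] at h2
  rw [tsum_mul_tsum_of_summable_norm (hnorm θ) h2]
  congr 1
  ext p
  obtain ⟨a, b⟩ := p
  simp only
  rw [mul_pow, mul_pow, ← Complex.exp_nat_mul, ← Complex.exp_nat_mul]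
  rw [div_mul_div_comm, mul_mul_mul_comm, ← Complex.exp_add]
  push_cast
  ring_nf

lemma geom_cycle (L : ℕ) (hL : 0 < L) (w : ℂ) (hw : w ^ L = 1) :
    ∑ j ∈ Finset.Icc 1 L, w ^ j = if w = 1 then (L : ℂ) else 0 := by
  have hins : Finset.range (L + 1) = insert 0 (Finset.Icc 1 L) := by
    ext j
    simp only [Finset.mem_range, Finset.mem_insert, Finset.mem_Icc]
    omega
  have h0 : (0 : ℕ) ∉ Finset.Icc 1 L := by simp
  have key : ∑ j ∈ Finset.range (L + 1), w ^ j = 1 + ∑ j ∈ Finset.Icc 1 L, w ^ j := by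
    rw [hins, Finset.sum_insert h0, pow_zero]
  by_cases h1 : w = 1
  · subst h1; simp
  · have hg := geom_sum_eq h1 (L + 1)
    rw [key, pow_succ, hw, one_mul, div_self (sub_ne_zero.mpr h1)] at hg
    rw [if_neg h1]
    linear_combination hg

lemma exp_div_eq_one_iff (L : ℕ) (hL : 0 < L) (n : ℤ) :
    Complex.exp ((n : ℝ) * (2 * Real.pi / L) * I) = 1 ↔ (L : ℤ) ∣ n := by
  rw [Complex.exp_eq_one_iff]
  constructor
  · rintro ⟨m, hm⟩
    refine ⟨m, ?_⟩
    have hI : (I : ℂ) ≠ 0 := I_ne_zero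
    have hπ : (Real.pi : ℂ) ≠ 0 := by exact_mod_cast Real.pi_ne_zero
    have hLc : (L : ℂ) ≠ 0 := by exact_mod_cast Nat.cast_ne_zero.mpr hL.ne'
    push_cast at hm
    field_simp at hm
    have h4 : ((n : ℂ) - L * m) * (2 * Real.pi * I) = 0 := by linear_combination (2 * Real.pi * I) * hm
    have h5 : (2 * (Real.pi : ℂ) * I) ≠ 0 := by
      simp [hπ, hI]
    have : (n : ℂ) = L * m := by
      rcases mul_eq_zero.mp h4 with h | h
      · linear_combination h
      · exact absurd h h5
    exact_mod_cast this
  · rintro ⟨m, rfl⟩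
    refine ⟨m, ?_⟩
    have hLc : (L : ℂ) ≠ 0 := by exact_mod_cast Nat.cast_ne_zero.mpr hL.ne'
    push_cast
    field_simp


lemma cyc_inner_sum (L : ℕ) (hL : 0 < L) (a b : ℕ) :
    ∑ j ∈ Finset.Icc 1 L, Complex.exp (((a : ℝ) - (b : ℝ)) * ((2 * Real.pi * j / L : ℝ)) * I)
      = if (L : ℤ) ∣ ((a : ℤ) - b) then (L : ℂ) else 0 := by
  have hLc : (L : ℂ) ≠ 0 := by exact_mod_cast Nat.cast_ne_zero.mpr hL.ne'
  set n : ℤ := (a : ℤ) - b with hn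
  set w : ℂ := Complex.exp ((n : ℝ) * (2 * Real.pi / L) * I) with hwdef
  have hterm : ∀ j : ℕ, Complex.exp (((a : ℝ) - (b : ℝ)) * ((2 * Real.pi * j / L : ℝ)) * I) = w ^ j := by
    intro j
    rw [hwdef, ← Complex.exp_nat_mul]
    congr 1
    rw [hn]
    push_cast
    ring
  have hwL : w ^ L = 1 := by
    rw [hwdef, ← Complex.exp_nat_mul]
    have he : (L : ℂ) * ((((n : ℤ) : ℝ) : ℂ) * (2 * ((Real.pi : ℝ) : ℂ) / ((L : ℕ) : ℂ)) * I) = (n : ℂ) * (2 * Real.pi * I) := by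
      push_cast
      field_simp
    rw [he]
    exact Complex.exp_int_mul_two_pi_mul_I n
  calc ∑ j ∈ Finset.Icc 1 L, Complex.exp (((a : ℝ) - (b : ℝ)) * ((2 * Real.pi * j / L : ℝ)) * I)
      = ∑ j ∈ Finset.Icc 1 L, w ^ j := by
        exact Finset.sum_congr rfl (fun j _ => hterm j)
    _ = if w = 1 then (L : ℂ) else 0 := geom_cycle L hL w hwL
    _ = if (L : ℤ) ∣ n then (L : ℂ) else 0 := by
        by_cases hd : (L : ℤ) ∣ n
        · rw [if_pos hd, if_pos ((exp_div_eq_one_iff L hL n).mpr hd)]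
        · rw [if_neg hd, if_neg (fun h => hd ((exp_div_eq_one_iff L hL n).mp h))]



noncomputable def Fc (L : ℕ) (t : ℝ) (p : ℕ × ℕ) : ℝ :=
  if (L : ℤ) ∣ ((p.1 : ℤ) - p.2) then t ^ (p.1 + p.2) / (p.1.factorial * p.2.factorial) else 0

lemma abs_le_base (L : ℕ) (t : ℝ) (p : ℕ × ℕ) (g : ℕ × ℕ → ℝ)
    (hg : g p = Fc L t p ∨ g p = 0) :
    ‖g p‖ ≤ |t| ^ (p.1 + p.2) / (p.1.factorial * p.2.factorial) := by
  have hF : ‖Fc L t p‖ ≤ |t| ^ (p.1 + p.2) / (p.1.factorial * p.2.factorial) := by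
    rw [Fc]
    split
    · refine le_of_eq ?_
      rw [Real.norm_eq_abs, _root_.abs_div, _root_.abs_pow]
      congr 1
      exact _root_.abs_of_nonneg (by positivity)
    · simp; positivity
  rcases hg with h | h <;> rw [h]
  · exact hF
  · simpa using le_trans (by simp) hF

lemma bessel_eq (n : ℕ) (t : ℝ) :
    besselI n (2 * t) = ∑' m : ℕ, t ^ (n + 2 * m) / (m.factorial * (n + m).factorial) := by
  have h2t : (2 * t) / 2 = t := by ring
  simp [besselI, h2t]

lemma slice_summable (n : ℕ) (t : ℝ) :
    Summable (fun m : ℕ => t ^ (n + 2 * m) / ((n + m).factorial * m.factorial)) := by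
  apply Summable.of_norm_bounded (g := fun m : ℕ => |t| ^ n * ((|t| ^ 2) ^ m / m.factorial))
    ((Real.summable_pow_div_factorial (|t| ^ 2)).mul_left _)
  intro m
  rw [Real.norm_eq_abs, _root_.abs_div, _root_.abs_pow, _root_.abs_of_nonneg
    (show (0:ℝ) ≤ ((n + m).factorial * m.factorial : ℝ) by positivity)]
  have hrhs : |t| ^ n * ((|t| ^ 2) ^ m / m.factorial) = |t| ^ (n + 2 * m) / m.factorial := by
    rw [pow_add, pow_mul, mul_div_assoc]
  rw [hrhs]
  apply div_le_div_of_nonneg_left (by positivity)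
    (by exact_mod_cast m.factorial_pos)
  calc (m.factorial : ℝ) = 1 * m.factorial := by ring
    _ ≤ (n + m).factorial * m.factorial := by
        gcongr
        exact_mod_cast Nat.one_le_iff_ne_zero.mpr (Nat.factorial_ne_zero _)

lemma comb (L : ℕ) (hL : 0 < L) (t : ℝ) :
    ∑' p : ℕ × ℕ, Fc L t p =
      besselI 0 (2 * t) + 2 * ∑' r : ℕ, besselI ((r + 1) * L) (2 * t) := by
  classical
  set D : ℕ × ℕ → ℝ := fun p => if p.1 = p.2 then Fc L t p else 0 with hD
  set P : ℕ × ℕ → ℝ := fun p => if p.2 < p.1 then Fc L t p else 0 with hP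
  set Q : ℕ × ℕ → ℝ := fun p => if p.1 < p.2 then Fc L t p else 0 with hQ
  have hbase := base_summable t
  have hsD : Summable D := hbase.of_norm_bounded (fun p => _root_.abs_le_base L t p D (by
    rw [hD]; dsimp only; split <;> simp))
  have hsP : Summable P := hbase.of_norm_bounded (fun p => _root_.abs_le_base L t p P (by
    rw [hP]; dsimp only; split <;> simp))
  have hsQ : Summable Q := hbase.of_norm_bounded (fun p => _root_.abs_le_base L t p Q (by
    rw [hQ]; dsimp only; split <;> simp))
  have hsplit : ∀ p, Fc L t p = D p + P p + Q p := by
    rintro ⟨a, b⟩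
    rw [hD, hP, hQ]
    dsimp only
    rcases lt_trichotomy a b with h | h | h
    · rw [if_neg (by omega), if_neg (by omega), if_pos h]; ring
    · rw [if_pos h, if_neg (by omega), if_neg (by omega)]; ring
    · rw [if_neg (by omega), if_pos h, if_neg (by omega)]; ring
  rw [tsum_congr hsplit, (hsD.add hsP).tsum_add hsQ, hsD.tsum_add hsP]
  -- diagonal
  have hDval : ∑' p : ℕ × ℕ, D p = besselI 0 (2 * t) := by
    have hinj : Function.Injective (fun m : ℕ => ((m, m) : ℕ × ℕ)) := by
      intro x y h; simpa using congrArg Prod.fst h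
    rw [← hinj.tsum_eq (f := D) (by
      rintro ⟨a, b⟩ hp
      by_contra hr
      apply hp
      rw [hD]; dsimp only
      rw [if_neg]
      intro hab
      exact hr ⟨a, by simp [hab]⟩)]
    rw [bessel_eq]
    apply tsum_congr
    intro m
    rw [hD]; dsimp only
    rw [if_pos rfl, Fc]
    simp only [sub_self]
    rw [if_pos (dvd_zero _)]
    norm_num [two_mul]
  -- strictly lower triangle (p.2 < p.1)
  have hPval : ∑' p : ℕ × ℕ, P p = ∑' r : ℕ, besselI ((r + 1) * L) (2 * t) := by
    set i2 : ℕ × ℕ → ℕ × ℕ := fun q => ((q.1 + 1) * L + q.2, q.2) with hi2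
    have hinj : Function.Injective i2 := by
      rintro ⟨r, m⟩ ⟨r', m'⟩ h
      rw [hi2] at h
      simp only [Prod.mk.injEq] at h
      obtain ⟨h1, h2⟩ := h
      subst h2
      have h3 : r + 1 = r' + 1 := Nat.eq_of_mul_eq_mul_right hL (by omega)
      have : r = r' := by omega
      simp [this]
    have hoff : Function.support P ⊆ Set.range i2 := by
      rintro ⟨a, b⟩ hp
      by_contra hr
      apply hp
      rw [hP]; dsimp only
      split
      · rename_i hab
        rw [Fc]
        dsimp only
        split
        · rename_i hdvd
          exfalso
          have hdvd' : L ∣ (a - b) := by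
            have hc : ((a - b : ℕ) : ℤ) = (a : ℤ) - b := by omega
            exact_mod_cast hc ▸ hdvd
          obtain ⟨k, hk⟩ := hdvd'
          have ha : a = L * k + b := (Nat.sub_eq_iff_eq_add (le_of_lt hab)).mp hk
          have hk1 : 1 ≤ k := by
            rcases Nat.eq_zero_or_pos k with h0 | h0
            · subst h0; simp at ha; omega
            · exact h0
          exact hr ⟨(k - 1, b), by
            rw [hi2]
            have he : (k - 1 + 1) * L = k * L := by congr 1; omega
            simp only [Prod.mk.injEq]
            refine ⟨by rw [he, mul_comm k L, ha], by trivial⟩⟩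
        · rfl
      · rfl
    rw [← hinj.tsum_eq (f := P) hoff]
    have hPi2 : ∀ q : ℕ × ℕ, P (i2 q) =
        t ^ ((q.1 + 1) * L + 2 * q.2) / (((q.1 + 1) * L + q.2).factorial * q.2.factorial) := by
      rintro ⟨r, m⟩
      rw [hi2, hP]; dsimp only
      rw [if_pos (Nat.lt_add_of_pos_left (Nat.mul_pos (Nat.succ_pos r) hL)), Fc]
      dsimp only
      rw [if_pos ⟨r + 1, by push_cast; ring⟩]
      congr 1
      ring
    rw [tsum_congr hPi2]
    have hsum2 : Summable (fun q : ℕ × ℕ =>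
        t ^ ((q.1 + 1) * L + 2 * q.2) / (((q.1 + 1) * L + q.2).factorial * q.2.factorial)) := by
      have := hsP.comp_injective hinj
      refine this.congr ?_
      intro q
      rw [← hPi2 q]
      rfl
    rw [Summable.tsum_prod' hsum2 (fun r => slice_summable ((r + 1) * L) t)]
    apply tsum_congr
    intro r
    rw [bessel_eq]
    apply tsum_congr
    intro m
    dsimp only
    rw [mul_comm ((((r + 1) * L + m).factorial : ℕ) : ℝ) ((m.factorial : ℕ) : ℝ)]
  -- strictly upper triangle equals lower by symmetry
  have hQval : ∑' p : ℕ × ℕ, Q p = ∑' p : ℕ × ℕ, P p := by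
    have hswap : ∀ p : ℕ × ℕ, Q p = P ((Equiv.prodComm ℕ ℕ) p) := by
      rintro ⟨a, b⟩
      rw [hQ, hP]
      show (if a < b then Fc L t (a, b) else 0) = if a < b then Fc L t (b, a) else 0
      by_cases h : a < b
      · rw [if_pos h, if_pos h, Fc, Fc]
        dsimp only
        by_cases hd : (L : ℤ) ∣ (a : ℤ) - b
        · rw [if_pos hd, if_pos (dvd_sub_comm.mp hd), Nat.add_comm b a,
            mul_comm ((b.factorial : ℕ) : ℝ) ((a.factorial : ℕ) : ℝ)]
        · rw [if_neg hd, if_neg (fun hc => hd (dvd_sub_comm.mp hc))]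
      · rw [if_neg h, if_neg h]
    rw [tsum_congr hswap, Equiv.tsum_eq (Equiv.prodComm ℕ ℕ) P]
  rw [hDval, hPval, hQval, hPval]
  ring

/-- Trace formula for the cycle graph on L ≥ 3 vertices: for all real t,
Σ_{j=1}^{L} exp(2t cos(2πj/L)) = L Σ_{r∈ℤ} I_{rL}(2t).  Since I_{−n} = I_n, the
two-sided sum is written as I_0(2t) + 2 Σ_{r≥1} I_{rL}(2t). -/





theorem cycle_trace_formula (L : ℕ) (hL : 3 ≤ L) (t : ℝ) :
    ∑ j ∈ Finset.Icc 1 L, Real.exp (2 * t * Real.cos (2 * Real.pi * j / L)) =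
      (L : ℝ) * (besselI 0 (2 * t) + 2 * ∑' r : ℕ, besselI ((r + 1) * L) (2 * t)) := by
  have hL0 : 0 < L := by omega
  rw [← Complex.ofReal_inj]
  have step1 : ∀ j : ℕ, (Real.exp (2 * t * Real.cos (2 * Real.pi * j / L)) : ℂ) =
      ∑' p : ℕ × ℕ, ((t ^ (p.1 + p.2) / (p.1.factorial * p.2.factorial) : ℝ) : ℂ) *
        Complex.exp (((p.1 : ℝ) - (p.2 : ℝ)) * ((2 * Real.pi * j / L : ℝ)) * I) :=
    fun j => expand_exp t (2 * Real.pi * j / L)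
  have hsummand : ∀ j : ℕ, Summable (fun p : ℕ × ℕ =>
      ((t ^ (p.1 + p.2) / (p.1.factorial * p.2.factorial) : ℝ) : ℂ) *
        Complex.exp (((p.1 : ℝ) - (p.2 : ℝ)) * ((2 * Real.pi * j / L : ℝ)) * I)) := by
    intro j
    apply Summable.of_norm_bounded (base_summable t)
    intro p
    rw [norm_mul]
    have harg : (((p.1 : ℝ) : ℂ) - ((p.2 : ℝ) : ℂ)) * ((2 * Real.pi * j / L : ℝ) : ℂ) * I
        = ((((p.1 : ℝ) - (p.2 : ℝ)) * (2 * Real.pi * j / L) : ℝ) : ℂ) * I := by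
      push_cast; ring
    rw [harg, Complex.norm_exp_ofReal_mul_I]
    rw [mul_one, Complex.norm_real]
    refine le_of_eq ?_
    rw [Real.norm_eq_abs, _root_.abs_div]
    congr 1
    · exact _root_.abs_pow t _
    · exact _root_.abs_of_nonneg (by positivity)
  calc ((∑ j ∈ Finset.Icc 1 L, Real.exp (2 * t * Real.cos (2 * Real.pi * j / L)) : ℝ) : ℂ)
      = ∑ j ∈ Finset.Icc 1 L, (Real.exp (2 * t * Real.cos (2 * Real.pi * j / L)) : ℂ) := by
        push_cast; rfl
    _ = ∑ j ∈ Finset.Icc 1 L, ∑' p : ℕ × ℕ,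
          ((t ^ (p.1 + p.2) / (p.1.factorial * p.2.factorial) : ℝ) : ℂ) *
          Complex.exp (((p.1 : ℝ) - (p.2 : ℝ)) * ((2 * Real.pi * j / L : ℝ)) * I) :=
        Finset.sum_congr rfl (fun j _ => step1 j)
    _ = ∑' p : ℕ × ℕ, ∑ j ∈ Finset.Icc 1 L,
          ((t ^ (p.1 + p.2) / (p.1.factorial * p.2.factorial) : ℝ) : ℂ) *
          Complex.exp (((p.1 : ℝ) - (p.2 : ℝ)) * ((2 * Real.pi * j / L : ℝ)) * I) :=
        (Summable.tsum_finsetSum (fun j _ => hsummand j)).symm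
    _ = ∑' p : ℕ × ℕ, ((L : ℂ) * ((Fc L t p : ℝ) : ℂ)) := by
        apply tsum_congr
        rintro ⟨a, b⟩
        rw [← Finset.mul_sum, cyc_inner_sum L hL0 a b, Fc]
        dsimp only
        split
        · push_cast; ring
        · simp
    _ = (L : ℂ) * ∑' p : ℕ × ℕ, ((Fc L t p : ℝ) : ℂ) := tsum_mul_left
    _ = (L : ℂ) * ((∑' p : ℕ × ℕ, Fc L t p : ℝ) : ℂ) := by rw [Complex.ofReal_tsum]
    _ = ((L : ℝ) * (besselI 0 (2 * t) + 2 * ∑' r : ℕ, besselI ((r + 1) * L) (2 * t)) : ℝ) := by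
        rw [comb L hL0 t]
        push_cast
        ring
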